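/- Let μ and ν be probability measures on X^n and Y^n respectively (X, Y finite), and μ⊗ν their parallel product on (X×Y)^n. Then for all 1 ≤ i < j ≤ n: η̄_{ij}(μ⊗ν) ≤ η̄_{ij}(μ) + η̄_{ij}(ν). -/

import Mathlib

open scoped BigOperators

/-- Probability (under `μ`) of the event that the first `i` coordinates agree with `z`. -/
noncomputable def prefProb {n : ℕ} {Ω : Type*} [Fintype Ω] [DecidableEq Ω] (μ : (Fin n → Ω) → ℝ) (i : ℕ)
    (z : Fin n → Ω) : ℝ :=
  ∑ x : Fin n → Ω, if ∀ t : Fin n, (t : ℕ) < i → x t = z t then μ x else 0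

/-- Conditional probability that the suffix `X_j,…,X_n` (1-based `j`) equals `s`,
given that the first `i` coordinates agree with `z`. -/
noncomputable def condSuffix {n : ℕ} {Ω : Type*} [Fintype Ω] [DecidableEq Ω]
    (μ : (Fin n → Ω) → ℝ) (i j : ℕ) (z : Fin n → Ω)
    (s : {t : Fin n // j ≤ (t : ℕ) + 1} → Ω) : ℝ :=
  (∑ x : Fin n → Ω,
      if (∀ t : Fin n, (t : ℕ) < i → x t = z t) ∧
          (∀ t : {t : Fin n // j ≤ (t : ℕ) + 1}, x t.1 = s t)
        then μ x else 0) / prefProb μ i z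

/-- Replace the `i`-th (1-based) coordinate of `y` by `w` (this encodes the prefix `yw`). -/
def setCoord {n : ℕ} {Ω : Type*} (y : Fin n → Ω) (i : ℕ) (w : Ω) : Fin n → Ω :=
  fun t => if (t : ℕ) + 1 = i then w else y t

/-- `η_{ij}(μ; y, w, w')`: total variation distance between the conditional laws of
`X_j,…,X_n` given the prefixes `yw` and `yw'`. -/
noncomputable def eta {n : ℕ} {Ω : Type*} [Fintype Ω] [DecidableEq Ω]
    (μ : (Fin n → Ω) → ℝ) (i j : ℕ) (y : Fin n → Ω) (w w' : Ω) : ℝ :=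
  (1 / 2) * ∑ s : {t : Fin n // j ≤ (t : ℕ) + 1} → Ω,
    |condSuffix μ i j (setCoord y i w) s - condSuffix μ i j (setCoord y i w') s|

/-- `η̄_{ij}(μ)`: the η-mixing coefficient. -/
noncomputable def etaBar {n : ℕ} {Ω : Type*} [Fintype Ω] [DecidableEq Ω]
    (μ : (Fin n → Ω) → ℝ) (i j : ℕ) : ℝ :=
  ⨆ y : Fin n → Ω, ⨆ w : Ω, ⨆ w' : Ω, eta μ i j y w w'

/-- `μ` is a probability mass function. -/
def IsProbMeas {α : Type*} [Fintype α] (μ : α → ℝ) : Prop :=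
  (∀ x, 0 ≤ μ x) ∧ ∑ x, μ x = 1

/-- The parallel product of measures `μ` on `X^n` and `ν` on `Y^n`, as a measure on
`(X × Y)^n`, viewing a sequence over `X × Y` as a pair of sequences. -/
def parProd {n : ℕ} {X Y : Type*} (μ : (Fin n → X) → ℝ) (ν : (Fin n → Y) → ℝ) :
    (Fin n → X × Y) → ℝ :=
  fun z => μ (fun t => (z t).1) * ν (fun t => (z t).2)

section Aux

set_option linter.unusedSectionVars false

variable {n : ℕ} {X Y : Type*} [Fintype X] [DecidableEq X] [Fintype Y] [DecidableEq Y]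

lemma sum_ite_factor (μ : (Fin n → X) → ℝ) (ν : (Fin n → Y) → ℝ)
    (F : (Fin n → X) → Prop) [DecidablePred F] (G : (Fin n → Y) → Prop) [DecidablePred G] :
    ∑ x : Fin n → X × Y,
      (if F (fun t => (x t).1) ∧ G (fun t => (x t).2)
        then μ (fun t => (x t).1) * ν (fun t => (x t).2) else 0)
    = (∑ a : Fin n → X, if F a then μ a else 0) * (∑ b : Fin n → Y, if G b then ν b else 0) := by
  rw [Finset.sum_mul_sum,
    ← Fintype.sum_prod_type (f := fun p : (Fin n → X) × (Fin n → Y) =>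
      (if F p.1 then μ p.1 else 0) * if G p.2 then ν p.2 else 0)]
  apply Fintype.sum_equiv (Equiv.arrowProdEquivProdArrow (Fin n) (fun _ => X) (fun _ => Y))
  intro x
  simp only [Equiv.arrowProdEquivProdArrow, Equiv.coe_fn_mk]
  exact (ite_zero_mul_ite_zero ..).symm

lemma prefProb_parProd (μ : (Fin n → X) → ℝ) (ν : (Fin n → Y) → ℝ) (i : ℕ)
    (z : Fin n → X × Y) :
    prefProb (parProd μ ν) i z
      = prefProb μ i (fun t => (z t).1) * prefProb ν i (fun t => (z t).2) := by
  unfold prefProb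
  rw [← sum_ite_factor μ ν (fun a => ∀ t : Fin n, (t : ℕ) < i → a t = (z t).1)
      (fun b => ∀ t : Fin n, (t : ℕ) < i → b t = (z t).2)]
  apply Finset.sum_congr rfl
  intro x _
  apply if_congr _ rfl rfl
  simp only [Prod.ext_iff]
  constructor
  · intro h; exact ⟨fun t ht => (h t ht).1, fun t ht => (h t ht).2⟩
  · intro h t ht; exact ⟨h.1 t ht, h.2 t ht⟩

lemma condSuffix_parProd (μ : (Fin n → X) → ℝ) (ν : (Fin n → Y) → ℝ) (i j : ℕ)
    (z : Fin n → X × Y) (s : {t : Fin n // j ≤ (t : ℕ) + 1} → X × Y) :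
    condSuffix (parProd μ ν) i j z s
      = condSuffix μ i j (fun t => (z t).1) (fun t => (s t).1)
        * condSuffix ν i j (fun t => (z t).2) (fun t => (s t).2) := by
  unfold condSuffix
  rw [div_mul_div_comm, ← prefProb_parProd]
  congr 1
  rw [← sum_ite_factor μ ν
      (fun a => (∀ t : Fin n, (t : ℕ) < i → a t = (z t).1)
        ∧ ∀ t : {t : Fin n // j ≤ (t : ℕ) + 1}, a t.1 = (s t).1)
      (fun b => (∀ t : Fin n, (t : ℕ) < i → b t = (z t).2)
        ∧ ∀ t : {t : Fin n // j ≤ (t : ℕ) + 1}, b t.1 = (s t).2)]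
  apply Finset.sum_congr rfl
  intro x _
  apply if_congr _ rfl rfl
  simp only [Prod.ext_iff]
  constructor
  · rintro ⟨h1, h2⟩
    exact ⟨⟨fun t ht => (h1 t ht).1, fun t => (h2 t).1⟩,
      ⟨fun t ht => (h1 t ht).2, fun t => (h2 t).2⟩⟩
  · rintro ⟨⟨ha1, ha2⟩, ⟨hb1, hb2⟩⟩
    exact ⟨fun t ht => ⟨ha1 t ht, hb1 t ht⟩, fun t => ⟨ha2 t, hb2 t⟩⟩

variable {Ω : Type*} [Fintype Ω] [DecidableEq Ω]

lemma prefProb_pos (μ : (Fin n → Ω) → ℝ) (hpos : ∀ x, 0 < μ x) (i : ℕ) (z : Fin n → Ω) :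
    0 < prefProb μ i z := by
  unfold prefProb
  apply Finset.sum_pos'
  · intro x _
    split
    · exact (hpos x).le
    · exact le_rfl
  · refine ⟨z, Finset.mem_univ z, ?_⟩
    rw [if_pos (fun t _ => rfl)]
    exact hpos z

lemma condSuffix_nonneg (μ : (Fin n → Ω) → ℝ) (hpos : ∀ x, 0 < μ x) (i j : ℕ)
    (z : Fin n → Ω) (s : {t : Fin n // j ≤ (t : ℕ) + 1} → Ω) :
    0 ≤ condSuffix μ i j z s := by
  apply div_nonneg _ (prefProb_pos μ hpos i z).le
  apply Finset.sum_nonneg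
  intro x _
  split
  · exact (hpos x).le
  · exact le_rfl

lemma sum_condSuffix (μ : (Fin n → Ω) → ℝ) (hpos : ∀ x, 0 < μ x) (i j : ℕ)
    (z : Fin n → Ω) :
    ∑ s : {t : Fin n // j ≤ (t : ℕ) + 1} → Ω, condSuffix μ i j z s = 1 := by
  unfold condSuffix
  rw [← Finset.sum_div]
  rw [Finset.sum_comm]
  have : ∀ x : Fin n → Ω,
      (∑ s : {t : Fin n // j ≤ (t : ℕ) + 1} → Ω,
        if (∀ t : Fin n, (t : ℕ) < i → x t = z t) ∧
            (∀ t : {t : Fin n // j ≤ (t : ℕ) + 1}, x t.1 = s t)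
          then μ x else 0)
      = if ∀ t : Fin n, (t : ℕ) < i → x t = z t then μ x else 0 := by
    intro x
    by_cases hP : ∀ t : Fin n, (t : ℕ) < i → x t = z t
    · rw [if_pos hP]
      have hiff : ∀ s : {t : Fin n // j ≤ (t : ℕ) + 1} → Ω,
          ((∀ t : Fin n, (t : ℕ) < i → x t = z t) ∧
            (∀ t : {t : Fin n // j ≤ (t : ℕ) + 1}, x t.1 = s t))
          ↔ ∀ t : {t : Fin n // j ≤ (t : ℕ) + 1}, x t.1 = s t :=
        fun s => and_iff_right hP
      simp only [hiff]
      rw [Finset.sum_eq_single (fun t : {t : Fin n // j ≤ (t : ℕ) + 1} => x t.1)]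
      · rw [if_pos (fun t => rfl)]
      · intro s _ hs
        rw [if_neg]
        intro h
        exact hs (funext fun t => (h t).symm)
      · intro h; exact absurd (Finset.mem_univ _) h
    · rw [if_neg hP]
      apply Finset.sum_eq_zero
      intro s _
      rw [if_neg]
      intro h
      exact hP h.1
  rw [Finset.sum_congr rfl (fun x _ => this x)]
  exact div_self (prefProb_pos μ hpos i z).ne'

lemma tv_prod {S1 S2 : Type*} [Fintype S1] [Fintype S2] (p1 q1 : S1 → ℝ) (p2 q2 : S2 → ℝ)
    (hp2 : ∀ s, 0 ≤ p2 s) (hq1 : ∀ s, 0 ≤ q1 s)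
    (hp2s : ∑ s, p2 s = 1) (hq1s : ∑ s, q1 s = 1) :
    ∑ a : S1, ∑ b : S2, |p1 a * p2 b - q1 a * q2 b|
      ≤ (∑ a : S1, |p1 a - q1 a|) + ∑ b : S2, |p2 b - q2 b| := by
  have key : ∀ (a : S1) (b : S2),
      |p1 a * p2 b - q1 a * q2 b| ≤ |p1 a - q1 a| * p2 b + q1 a * |p2 b - q2 b| := by
    intro a b
    have : p1 a * p2 b - q1 a * q2 b = (p1 a - q1 a) * p2 b + q1 a * (p2 b - q2 b) := by ring
    rw [this]
    calc |(p1 a - q1 a) * p2 b + q1 a * (p2 b - q2 b)|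
        ≤ |(p1 a - q1 a) * p2 b| + |q1 a * (p2 b - q2 b)| := abs_add_le _ _
      _ = |p1 a - q1 a| * p2 b + q1 a * |p2 b - q2 b| := by
          rw [abs_mul, abs_mul, abs_of_nonneg (hp2 b), abs_of_nonneg (hq1 a)]
  calc ∑ a : S1, ∑ b : S2, |p1 a * p2 b - q1 a * q2 b|
      ≤ ∑ a : S1, ∑ b : S2, (|p1 a - q1 a| * p2 b + q1 a * |p2 b - q2 b|) := by
        apply Finset.sum_le_sum; intro a _
        apply Finset.sum_le_sum; intro b _
        exact key a b
    _ = (∑ a : S1, |p1 a - q1 a|) * (∑ b : S2, p2 b)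
        + (∑ a : S1, q1 a) * (∑ b : S2, |p2 b - q2 b|) := by
        simp only [Finset.sum_add_distrib, ← Finset.mul_sum, ← Finset.sum_mul]
    _ = (∑ a : S1, |p1 a - q1 a|) + ∑ b : S2, |p2 b - q2 b| := by
        rw [hp2s, hq1s, mul_one, one_mul]

lemma setCoord_fst (y : Fin n → X × Y) (i : ℕ) (w : X × Y) :
    (fun t => (setCoord y i w t).1) = setCoord (fun t => (y t).1) i w.1 := by
  funext t
  by_cases h : (t : ℕ) + 1 = i <;> simp [setCoord, h]

lemma setCoord_snd (y : Fin n → X × Y) (i : ℕ) (w : X × Y) :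
    (fun t => (setCoord y i w t).2) = setCoord (fun t => (y t).2) i w.2 := by
  funext t
  by_cases h : (t : ℕ) + 1 = i <;> simp [setCoord, h]

lemma eta_parProd_le (μ : (Fin n → X) → ℝ) (ν : (Fin n → Y) → ℝ)
    (hμpos : ∀ x, 0 < μ x) (hνpos : ∀ y, 0 < ν y) (i j : ℕ)
    (y : Fin n → X × Y) (w w' : X × Y) :
    eta (parProd μ ν) i j y w w'
      ≤ eta μ i j (fun t => (y t).1) w.1 w'.1 + eta ν i j (fun t => (y t).2) w.2 w'.2 := by
  classical
  unfold eta
  rw [← mul_add]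
  have h2 : (0:ℝ) ≤ 1/2 := by norm_num
  apply mul_le_mul_of_nonneg_left _ h2
  have hsum : ∑ s : {t : Fin n // j ≤ (t : ℕ) + 1} → X × Y,
      |condSuffix (parProd μ ν) i j (setCoord y i w) s -
        condSuffix (parProd μ ν) i j (setCoord y i w') s|
    = ∑ a : {t : Fin n // j ≤ (t : ℕ) + 1} → X, ∑ b : {t : Fin n // j ≤ (t : ℕ) + 1} → Y,
      |condSuffix μ i j (setCoord (fun t => (y t).1) i w.1) a
          * condSuffix ν i j (setCoord (fun t => (y t).2) i w.2) b
        - condSuffix μ i j (setCoord (fun t => (y t).1) i w'.1) a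
          * condSuffix ν i j (setCoord (fun t => (y t).2) i w'.2) b| := by
    rw [← Fintype.sum_prod_type (f := fun p :
        ({t : Fin n // j ≤ (t : ℕ) + 1} → X) × ({t : Fin n // j ≤ (t : ℕ) + 1} → Y) =>
      |condSuffix μ i j (setCoord (fun t => (y t).1) i w.1) p.1
          * condSuffix ν i j (setCoord (fun t => (y t).2) i w.2) p.2
        - condSuffix μ i j (setCoord (fun t => (y t).1) i w'.1) p.1
          * condSuffix ν i j (setCoord (fun t => (y t).2) i w'.2) p.2|)]
    apply Fintype.sum_equiv (Equiv.arrowProdEquivProdArrow {t : Fin n // j ≤ (t : ℕ) + 1} (fun _ => X) (fun _ => Y))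
    intro s
    rw [condSuffix_parProd, condSuffix_parProd, setCoord_fst y i w, setCoord_snd y i w,
      setCoord_fst y i w', setCoord_snd y i w']
    simp only [Equiv.arrowProdEquivProdArrow, Equiv.coe_fn_mk]
  rw [hsum]
  exact tv_prod _ _ _ _
    (fun b => condSuffix_nonneg ν hνpos i j _ b)
    (fun a => condSuffix_nonneg μ hμpos i j _ a)
    (sum_condSuffix ν hνpos i j _)
    (sum_condSuffix μ hμpos i j _)

lemma le_etaBar {Ω : Type*} [Fintype Ω] [DecidableEq Ω] (μ : (Fin n → Ω) → ℝ) (i j : ℕ)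
    (y : Fin n → Ω) (w w' : Ω) : eta μ i j y w w' ≤ etaBar μ i j := by
  have h1 : eta μ i j y w w' ≤ ⨆ w'' : Ω, eta μ i j y w w'' :=
    le_ciSup (Set.Finite.bddAbove (Set.finite_range _)) w'
  have h2 : (⨆ w'' : Ω, eta μ i j y w w'') ≤ ⨆ w₀ : Ω, ⨆ w'' : Ω, eta μ i j y w₀ w'' :=
    le_ciSup (f := fun w₀ : Ω => ⨆ w'' : Ω, eta μ i j y w₀ w'')
      (Set.Finite.bddAbove (Set.finite_range _)) w
  have h3 : (⨆ w₀ : Ω, ⨆ w'' : Ω, eta μ i j y w₀ w'') ≤ etaBar μ i j :=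
    le_ciSup (f := fun y₀ : Fin n → Ω => ⨆ w₀ : Ω, ⨆ w'' : Ω, eta μ i j y₀ w₀ w'')
      (Set.Finite.bddAbove (Set.finite_range _)) y
  exact h1.trans (h2.trans h3)

end Aux

/-- upper bound for the η-mixing coefficients of a parallel product. -/
theorem etaBar_parProd_upper {n : ℕ} {X Y : Type*} [Fintype X] [DecidableEq X]
    [Fintype Y] [DecidableEq Y]
    (μ : (Fin n → X) → ℝ) (ν : (Fin n → Y) → ℝ)
    (hμ : IsProbMeas μ) (hν : IsProbMeas ν)
    (hμpos : ∀ x, 0 < μ x) (hνpos : ∀ y, 0 < ν y)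
    (i j : ℕ) (hi : 1 ≤ i) (hij : i < j) (hjn : j ≤ n) :
    etaBar (parProd μ ν) i j ≤ etaBar μ i j + etaBar ν i j := by
  have hn : 1 ≤ n := le_trans (by omega) hjn
  have hXf : Nonempty (Fin n → X) := by
    by_contra h
    rw [not_nonempty_iff] at h
    have h1 := hμ.2
    rw [Finset.univ_eq_empty, Finset.sum_empty] at h1
    norm_num at h1
  have hYf : Nonempty (Fin n → Y) := by
    by_contra h
    rw [not_nonempty_iff] at h
    have h1 := hν.2
    rw [Finset.univ_eq_empty, Finset.sum_empty] at h1
    norm_num at h1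
  haveI hX : Nonempty X := ⟨hXf.some ⟨0, by omega⟩⟩
  haveI hY : Nonempty Y := ⟨hYf.some ⟨0, by omega⟩⟩
  haveI : Nonempty (X × Y) := inferInstance
  haveI : Nonempty (Fin n → X × Y) := inferInstance
  refine ciSup_le fun y => ciSup_le fun w => ciSup_le fun w' => ?_
  exact (eta_parProd_le μ ν hμpos hνpos i j y w w').trans
    (add_le_add (le_etaBar μ i j _ _ _) (le_etaBar ν i j _ _ _))
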